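/- For an ortholattice A, the map g : A → B(X_A) defined by g(a) = {b ∈ A∖{0} : b ≤ a} is an injective ortholattice homomorphism into the complete ortholattice of bi-orthogonally closed subsets of the orthoframe X_A = ⟨A∖{0}; ⊥⟩, where a ⊥ b ⟺ a ≤ b^⊥. -/
import Mathlib


structure IsOrtho {A : Type*} [Lattice A] [BoundedOrder A] (c : A → A) : Prop where
  inf_compl : ∀ a : A, a ⊓ c a = ⊥
  sup_compl : ∀ a : A, a ⊔ c a = ⊤
  anti : ∀ a b : A, a ≤ b → c b ≤ c a
  invol : ∀ a : A, c (c a) = a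

structure IsQuant {A : Type*} [Lattice A] [BoundedOrder A] (c : A → A) (E : A → A) : Prop where
  sup : ∀ a b : A, E (a ⊔ b) = E a ⊔ E b
  bot : E ⊥ = ⊥
  idem : ∀ a : A, E (E a) = E a
  le : ∀ a : A, a ≤ E a
  closed_compl : ∀ a : A, E (c (E a)) = c (E a)

def perp {X : Type*} (r : X → X → Prop) (U : Set X) : Set X :=
  {a | ∀ b ∈ U, r a b}

theorem macneille_embedding {A : Type*} [Lattice A] [BoundedOrder A]
    (c : A → A) (h : IsOrtho c) :
    let r : {a : A // a ≠ ⊥} → {a : A // a ≠ ⊥} → Prop := fun x y => (x : A) ≤ c y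
    let g : A → Set {a : A // a ≠ ⊥} := fun a => {b | (b : A) ≤ a}
    (∀ a : A, g a = perp r (perp r (g a))) ∧
    Function.Injective g ∧
    (∀ a b : A, g (a ⊓ b) = g a ∩ g b) ∧
    (∀ a b : A, g (a ⊔ b) = perp r (perp r (g a ∪ g b))) ∧
    (∀ a : A, g (c a) = perp r (g a)) ∧
    g ⊥ = (∅ : Set {a : A // a ≠ ⊥}) ∧
    g ⊤ = (Set.univ : Set {a : A // a ≠ ⊥}) := by
  intro r g
  have hcbot : c ⊥ = ⊤ := by
    have := h.sup_compl ⊥; simpa using this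
  -- key: perp of g a is g (c a)
  have key : ∀ a : A, perp r (g a) = g (c a) := by
    intro a
    ext x
    simp only [perp, g, Set.mem_setOf_eq]
    constructor
    · intro hx
      by_cases ha : a = ⊥
      · subst ha; rw [hcbot]; exact le_top
      · exact hx ⟨a, ha⟩ le_rfl
    · intro hx b hb
      exact hx.trans (h.anti _ _ hb)
  have dm : ∀ a b : A, c (a ⊔ b) = c a ⊓ c b := by
    intro a b
    apply le_antisymm
    · exact le_inf (h.anti _ _ le_sup_left) (h.anti _ _ le_sup_right)
    · have h1 : a ⊔ b ≤ c (c a ⊓ c b) := by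
        apply sup_le
        · have := h.anti _ _ (inf_le_left (a := c a) (b := c b))
          rwa [h.invol] at this
        · have := h.anti _ _ (inf_le_right (a := c a) (b := c b))
          rwa [h.invol] at this
      have := h.anti _ _ h1
      rwa [h.invol] at this
  have gmeet : ∀ a b : A, g (a ⊓ b) = g a ∩ g b := by
    intro a b
    ext x
    simp [g, le_inf_iff]
  have punion : ∀ U V : Set {a : A // a ≠ ⊥},
      perp r (U ∪ V) = perp r U ∩ perp r V := by
    intro U V
    ext x
    simp only [perp, Set.mem_setOf_eq, Set.mem_union, Set.mem_inter_iff]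
    constructor
    · intro hx; exact ⟨fun b hb => hx b (Or.inl hb), fun b hb => hx b (Or.inr hb)⟩
    · rintro ⟨h1, h2⟩ b (hb | hb)
      · exact h1 b hb
      · exact h2 b hb
  refine ⟨?_, ?_, gmeet, ?_, fun a => (key a).symm, ?_, ?_⟩
  · intro a
    rw [key, key, h.invol]
  · intro a b hab
    by_cases ha : a = ⊥
    · subst ha
      by_contra hb
      have : (⟨b, fun hbb => hb hbb.symm⟩ : {a : A // a ≠ ⊥}) ∈ g b := le_rfl
      rw [← hab] at this
      exact hb (le_antisymm this bot_le).symm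
    · by_cases hb : b = ⊥
      · subst hb
        have : (⟨a, ha⟩ : {a : A // a ≠ ⊥}) ∈ g a := le_rfl
        rw [hab] at this
        exact absurd (le_antisymm this bot_le) ha
      · have h1 : (⟨a, ha⟩ : {a : A // a ≠ ⊥}) ∈ g a := le_rfl
        have h2 : (⟨b, hb⟩ : {a : A // a ≠ ⊥}) ∈ g b := le_rfl
        rw [hab] at h1
        rw [← hab] at h2
        exact le_antisymm h1 h2
  · intro a b
    rw [punion, key, key, ← gmeet, key, ← dm, h.invol]
  · ext x
    simp only [g, Set.mem_setOf_eq, Set.mem_empty_iff_false, iff_false]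
    exact fun hx => x.2 (le_antisymm hx bot_le)
  · ext x
    simp [g]
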